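/- Let β : ℝ → ℝ be a C^∞ function whose derivative β' has compact support, and fix T ∈ ℝ. For r > 0 define f_r on E ∖ {0}, where E = EuclideanSpace ℝ (Fin 4), by f_r(x) = β(log ‖x‖ − log r + T). Then: (i) for every x ≠ 0 and every r > 0, |∂f_r(x)/∂r| ≤ (sup_t |β'(t)|)/r; (ii) there is a constant C, depending only on β, such that for every r > 0 the spatial gradient of ∂f_r/∂r satisfies (∫_E ‖∇_x (∂f_r/∂r)(x)‖⁴ dx)^{1/4} ≤ C/r. -/

import Mathlib

open MeasureTheory

private lemma cutoff_aux_deriv (β : ℝ → ℝ) (hβ : ContDiff ℝ (⊤ : ℕ∞) β) (A T : ℝ) {r : ℝ}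
    (hr : 0 < r) :
    deriv (fun s : ℝ => β (A - Real.log s + T)) r
      = deriv β (A - Real.log r + T) * (-r⁻¹) := by
  have h1 : HasDerivAt (fun s : ℝ => A - Real.log s + T) (-r⁻¹) r := by
    simpa using ((Real.hasDerivAt_log hr.ne').const_sub A).add_const T
  have h2 : HasDerivAt β (deriv β (A - Real.log r + T)) (A - Real.log r + T) :=
    (hβ.differentiable (by simp) _).hasDerivAt
  exact (h2.comp r h1).deriv

/-- For a smooth cut-off function `β` with compactly supported derivative, the
radial cut-off functions `f_r(x) = β(log ‖x‖ - log r + T)` on `ℝ⁴ ∖ {0}` satisfy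
`|∂f_r/∂r| ≤ (sup |β'|) / r`, and the `L⁴`-norm of the spatial gradient of
`∂f_r/∂r` is bounded by `C / r` with `C` depending only on `β`. -/
theorem cutoff_radius_derivative_bounds (β : ℝ → ℝ) (hβ : ContDiff ℝ (⊤ : ℕ∞) β)
    (hsupp : HasCompactSupport (deriv β)) :
    (∀ (T r : ℝ), 0 < r → ∀ x : EuclideanSpace ℝ (Fin 4), x ≠ 0 →
      |deriv (fun s : ℝ => β (Real.log ‖x‖ - Real.log s + T)) r| ≤
        (⨆ t : ℝ, |deriv β t|) / r) ∧
    ∃ C : ℝ, ∀ (T r : ℝ), 0 < r →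
      (∫ x : EuclideanSpace ℝ (Fin 4),
          ‖fderiv ℝ (fun y : EuclideanSpace ℝ (Fin 4) =>
            deriv (fun s : ℝ => β (Real.log ‖y‖ - Real.log s + T)) r) x‖ ^ 4) ^
        ((1 : ℝ) / 4) ≤ C / r := by
  have hβ' : ContDiff ℝ (⊤ : ℕ∞) (deriv β) := (contDiff_infty_iff_deriv.mp hβ).2
  have hcont' : Continuous (deriv β) := hβ'.continuous
  have hβ'' : ContDiff ℝ (⊤ : ℕ∞) (deriv (deriv β)) := (contDiff_infty_iff_deriv.mp hβ').2
  have hcont'' : Continuous (deriv (deriv β)) := hβ''.continuous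
  obtain ⟨C2, hC2⟩ := (hsupp.deriv).exists_bound_of_continuous hcont''
  have hC2_0 : 0 ≤ C2 := le_trans (norm_nonneg _) (hC2 0)
  obtain ⟨M, hM0, hM⟩ :=
    (hsupp.isCompact.isBounded.union hsupp.deriv.isCompact.isBounded).subset_closedBall_lt 0 0
  have hz' : ∀ t : ℝ, M < |t| → deriv β t = 0 := by
    intro t ht
    apply image_eq_zero_of_notMem_tsupport
    intro hmem
    exact absurd (by simpa using hM (Or.inl hmem)) (not_le.2 ht)
  have hz'' : ∀ t : ℝ, M < |t| → deriv (deriv β) t = 0 := by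
    intro t ht
    apply image_eq_zero_of_notMem_tsupport
    intro hmem
    exact absurd (by simpa using hM (Or.inr hmem)) (not_le.2 ht)
  constructor
  · intro T r hr x hx
    rw [cutoff_aux_deriv β hβ _ T hr]
    have bdd : BddAbove (Set.range fun t => |deriv β t|) := by
      obtain ⟨C1, hC1⟩ := hsupp.exists_bound_of_continuous hcont'
      refine ⟨C1, ?_⟩
      rintro v ⟨t, rfl⟩
      simpa [Real.norm_eq_abs] using hC1 t
    calc |deriv β (Real.log ‖x‖ - Real.log r + T) * (-r⁻¹)|
        = |deriv β (Real.log ‖x‖ - Real.log r + T)| * r⁻¹ := by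
          rw [abs_mul, abs_neg, abs_inv, abs_of_pos hr]
      _ ≤ (⨆ t : ℝ, |deriv β t|) / r := by
          rw [div_eq_mul_inv]
          exact mul_le_mul_of_nonneg_right (le_ciSup bdd _) (inv_nonneg.2 hr.le)
  · set V : ℝ := (volume (Metric.ball (0 : EuclideanSpace ℝ (Fin 4)) 1)).toReal with hV_def
    refine ⟨C2 * Real.exp (2 * M) * V ^ ((1 : ℝ) / 4), ?_⟩
    intro T r hr
    have hfun : (fun y : EuclideanSpace ℝ (Fin 4) =>
        deriv (fun s : ℝ => β (Real.log ‖y‖ - Real.log s + T)) r)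
        = fun y : EuclideanSpace ℝ (Fin 4) =>
            deriv β (Real.log ‖y‖ - Real.log r + T) * (-r⁻¹) :=
      funext fun y => cutoff_aux_deriv β hβ _ T hr
    rw [hfun]
    set G : EuclideanSpace ℝ (Fin 4) → ℝ :=
      fun y => deriv β (Real.log ‖y‖ - Real.log r + T) * (-r⁻¹) with hG
    set a : ℝ := r * Real.exp (-T - M) with ha_def
    set b : ℝ := r * Real.exp (M - T) with hb_def
    have ha : 0 < a := mul_pos hr (Real.exp_pos _)
    have hb : 0 < b := mul_pos hr (Real.exp_pos _)
    have hu_lt : ∀ y : EuclideanSpace ℝ (Fin 4), y ≠ 0 → ‖y‖ < a →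
        Real.log ‖y‖ - Real.log r + T < -M := by
      intro y hy hya
      have h1 : Real.log ‖y‖ < Real.log a := Real.log_lt_log (norm_pos_iff.2 hy) hya
      rw [ha_def, Real.log_mul hr.ne' (Real.exp_ne_zero _), Real.log_exp] at h1
      linarith
    have hu_gt : ∀ y : EuclideanSpace ℝ (Fin 4), b < ‖y‖ →
        M < Real.log ‖y‖ - Real.log r + T := by
      intro y hyb
      have h1 : Real.log b < Real.log ‖y‖ := Real.log_lt_log hb hyb
      rw [hb_def, Real.log_mul hr.ne' (Real.exp_ne_zero _), Real.log_exp] at h1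
      linarith
    have key : ∀ y : EuclideanSpace ℝ (Fin 4), y ≠ 0 →
        ‖fderiv ℝ G y‖ ≤ r⁻¹ * |deriv (deriv β) (Real.log ‖y‖ - Real.log r + T)| * ‖y‖⁻¹ := by
      intro y hy
      have hny : (0 : ℝ) < ‖y‖ := norm_pos_iff.2 hy
      have hny2 : (‖y‖ ^ 2 : ℝ) ≠ 0 := by positivity
      have h0 : HasFDerivAt (fun z : EuclideanSpace ℝ (Fin 4) => ‖z‖ ^ 2)
          (2 • innerSL ℝ y) y := (hasStrictFDerivAt_norm_sq y).hasFDerivAt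
      have h1 : HasFDerivAt (fun z : EuclideanSpace ℝ (Fin 4) => Real.log (‖z‖ ^ 2))
          ((‖y‖ ^ 2)⁻¹ • (2 • innerSL ℝ y)) y :=
        by have := (Real.hasDerivAt_log hny2).comp_hasFDerivAt y h0; exact this
      have h2 : HasFDerivAt (fun z : EuclideanSpace ℝ (Fin 4) =>
          Real.log ‖z‖ - Real.log r + T)
          ((2 : ℝ)⁻¹ • ((‖y‖ ^ 2)⁻¹ • (2 • innerSL ℝ y))) y := by
        have heq : (fun z : EuclideanSpace ℝ (Fin 4) => Real.log ‖z‖ - Real.log r + T)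
            = fun z : EuclideanSpace ℝ (Fin 4) =>
                (2 : ℝ)⁻¹ * Real.log (‖z‖ ^ 2) - Real.log r + T := by
          funext z
          rw [Real.log_pow]
          push_cast
          ring
        rw [heq]
        exact ((h1.const_mul ((2 : ℝ)⁻¹)).sub_const _).add_const _
      have hd : HasDerivAt (deriv β)
          (deriv (deriv β) (Real.log ‖y‖ - Real.log r + T))
          (Real.log ‖y‖ - Real.log r + T) :=
        (hβ'.differentiable (by simp) _).hasDerivAt
      have h3 : HasFDerivAt G
          ((-r⁻¹ : ℝ) • ((deriv (deriv β) (Real.log ‖y‖ - Real.log r + T)) •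
            ((2 : ℝ)⁻¹ • ((‖y‖ ^ 2)⁻¹ • (2 • innerSL ℝ y))))) y := by
        rw [hG]
        exact (hd.comp_hasFDerivAt y h2).mul_const _
      have h4 : ‖(2 : ℕ) • innerSL ℝ y‖ = 2 * ‖y‖ := by
        rw [← Nat.cast_smul_eq_nsmul ℝ, norm_smul, innerSL_apply_norm]
        norm_num
      rw [h3.fderiv, norm_smul, norm_smul, norm_smul, norm_smul, h4]
      rw [Real.norm_eq_abs, Real.norm_eq_abs, Real.norm_eq_abs, Real.norm_eq_abs,
        abs_neg, abs_inv, abs_of_pos hr]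
      apply le_of_eq
      have h5 : |(2 : ℝ)⁻¹| = (2 : ℝ)⁻¹ := by norm_num
      have h6 : |(‖y‖ ^ 2)⁻¹| = (‖y‖ ^ 2)⁻¹ := abs_of_pos (by positivity)
      rw [h5, h6]
      field_simp
    have hG0 : ∀ y : EuclideanSpace ℝ (Fin 4), y ≠ 0 → ‖y‖ < a → G y = 0 := by
      intro y hy hya
      have h1 := hu_lt y hy hya
      have h2 : deriv β (Real.log ‖y‖ - Real.log r + T) = 0 :=
        hz' _ (lt_abs.2 (Or.inr (by linarith)))
      rw [hG]
      simp [h2]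
    have hfd0 : fderiv ℝ G 0 = 0 := by
      by_cases h00 : G 0 = 0
      · have hev : G =ᶠ[nhds (0 : EuclideanSpace ℝ (Fin 4))] fun _ => (0 : ℝ) := by
          filter_upwards [Metric.ball_mem_nhds (0 : EuclideanSpace ℝ (Fin 4)) ha] with z hz
          rcases eq_or_ne z 0 with rfl | hz0
          · exact h00
          · exact hG0 z hz0 (by simpa [Metric.mem_ball, dist_zero_right] using hz)
        rw [hev.fderiv_eq]
        exact fderiv_const_apply 0
      · apply fderiv_zero_of_not_differentiableAt
        intro hdiff
        have h1 : Filter.Tendsto G (nhdsWithin (0 : EuclideanSpace ℝ (Fin 4)) {(0 : EuclideanSpace ℝ (Fin 4))}ᶜ)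
            (nhds (G 0)) := hdiff.continuousAt.tendsto.mono_left nhdsWithin_le_nhds
        have h2 : Filter.Tendsto G (nhdsWithin (0 : EuclideanSpace ℝ (Fin 4)) {(0 : EuclideanSpace ℝ (Fin 4))}ᶜ)
            (nhds (0 : ℝ)) := by
          apply Filter.Tendsto.congr' ?_ tendsto_const_nhds
          filter_upwards [self_mem_nhdsWithin,
            mem_nhdsWithin_of_mem_nhds (Metric.ball_mem_nhds (0 : EuclideanSpace ℝ (Fin 4)) ha)]
            with z hz1 hz2
          exact (hG0 z hz1 (by simpa [Metric.mem_ball, dist_zero_right] using hz2)).symm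
        exact h00 (tendsto_nhds_unique h1 h2)
    set c0 : ℝ := r⁻¹ * C2 * a⁻¹ with hc0_def
    have hc0_0 : 0 ≤ c0 := by positivity
    have hpt : ∀ y : EuclideanSpace ℝ (Fin 4), y ≠ 0 →
        ‖fderiv ℝ G y‖ ^ 4 ≤
          Set.indicator (Metric.closedBall (0 : EuclideanSpace ℝ (Fin 4)) b)
            (fun _ => c0 ^ 4) y := by
      intro y hy
      by_cases hyb : ‖y‖ ≤ b
      · rw [Set.indicator_of_mem (by simpa [Metric.mem_closedBall, dist_zero_right] using hyb)]
        by_cases hya : a ≤ ‖y‖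
        · have h1 := key y hy
          have h2 : r⁻¹ * |deriv (deriv β) (Real.log ‖y‖ - Real.log r + T)| * ‖y‖⁻¹ ≤ c0 := by
            rw [hc0_def]
            have hAbs : |deriv (deriv β) (Real.log ‖y‖ - Real.log r + T)| ≤ C2 := by
              simpa [Real.norm_eq_abs] using hC2 (Real.log ‖y‖ - Real.log r + T)
            have hinv : ‖y‖⁻¹ ≤ a⁻¹ := inv_anti₀ ha hya
            exact mul_le_mul (mul_le_mul_of_nonneg_left hAbs (inv_nonneg.2 hr.le)) hinv
              (inv_nonneg.2 (norm_nonneg _)) (by positivity)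
          exact pow_le_pow_left₀ (norm_nonneg _) (h1.trans h2) 4
        · have hu := hu_lt y hy (lt_of_not_ge hya)
          have h2 : deriv (deriv β) (Real.log ‖y‖ - Real.log r + T) = 0 :=
            hz'' _ (lt_abs.2 (Or.inr (by linarith)))
          have h1 := key y hy
          rw [h2] at h1
          simp only [abs_zero, mul_zero, zero_mul] at h1
          have h3 : ‖fderiv ℝ G y‖ = 0 := le_antisymm h1 (norm_nonneg _)
          simpa [h3] using pow_nonneg hc0_0 4
      · rw [Set.indicator_of_notMem (by simpa [Metric.mem_closedBall, dist_zero_right] using hyb)]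
        have hu := hu_gt y (lt_of_not_ge hyb)
        have h2 : deriv (deriv β) (Real.log ‖y‖ - Real.log r + T) = 0 :=
          hz'' _ (lt_abs.2 (Or.inl (by linarith)))
        have h1 := key y hy
        rw [h2] at h1
        simp only [abs_zero, mul_zero, zero_mul] at h1
        have h3 : ‖fderiv ℝ G y‖ = 0 := le_antisymm h1 (norm_nonneg _)
        simp [h3]
    have hzero_ae : ∀ᵐ y : EuclideanSpace ℝ (Fin 4),
        ‖fderiv ℝ G y‖ ^ 4 ≤
          Set.indicator (Metric.closedBall (0 : EuclideanSpace ℝ (Fin 4)) b)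
            (fun _ => c0 ^ 4) y := by
      have h0 : ∀ᵐ y : EuclideanSpace ℝ (Fin 4), y ≠ 0 := by
        have hset : {y : EuclideanSpace ℝ (Fin 4) | ¬ y ≠ 0} = {0} := by ext; simp
        rw [ae_iff, hset]
        exact measure_singleton 0
      filter_upwards [h0] with y hy using hpt y hy
    have hmeas : AEStronglyMeasurable (fun y : EuclideanSpace ℝ (Fin 4) => ‖fderiv ℝ G y‖ ^ 4)
        volume := ((measurable_fderiv ℝ G).norm.pow_const 4).aestronglyMeasurable
    have hindInt : Integrable
        (Set.indicator (Metric.closedBall (0 : EuclideanSpace ℝ (Fin 4)) b)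
          (fun _ => c0 ^ 4)) volume :=
      (integrableOn_const measure_closedBall_lt_top.ne).integrable_indicator
        measurableSet_closedBall
    have hInt : Integrable (fun y : EuclideanSpace ℝ (Fin 4) => ‖fderiv ℝ G y‖ ^ 4) volume := by
      apply hindInt.mono' hmeas
      filter_upwards [hzero_ae] with y hy
      simpa [abs_of_nonneg (by positivity : (0:ℝ) ≤ ‖fderiv ℝ G y‖ ^ 4)] using hy
    have hint_le : (∫ y : EuclideanSpace ℝ (Fin 4), ‖fderiv ℝ G y‖ ^ 4)
        ≤ c0 ^ 4 * (volume (Metric.closedBall (0 : EuclideanSpace ℝ (Fin 4)) b)).toReal := by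
      calc (∫ y : EuclideanSpace ℝ (Fin 4), ‖fderiv ℝ G y‖ ^ 4)
          ≤ ∫ y : EuclideanSpace ℝ (Fin 4),
              Set.indicator (Metric.closedBall (0 : EuclideanSpace ℝ (Fin 4)) b)
                (fun _ => c0 ^ 4) y := integral_mono_ae hInt hindInt hzero_ae
        _ = (volume (Metric.closedBall (0 : EuclideanSpace ℝ (Fin 4)) b)).toReal • c0 ^ 4 :=
            integral_indicator_const _ measurableSet_closedBall
        _ = c0 ^ 4 * (volume (Metric.closedBall (0 : EuclideanSpace ℝ (Fin 4)) b)).toReal := by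
            rw [smul_eq_mul, mul_comm]
    have hvol : (volume (Metric.closedBall (0 : EuclideanSpace ℝ (Fin 4)) b)).toReal
        = b ^ 4 * V := by
      rw [Measure.addHaar_closedBall _ _ hb.le, finrank_euclideanSpace_fin,
        ENNReal.toReal_mul, ENNReal.toReal_ofReal (by positivity)]
    have hab : a⁻¹ * b = Real.exp (2 * M) := by
      have hexp : Real.exp (M - T) = Real.exp (-T - M) * Real.exp (2 * M) := by
        rw [← Real.exp_add]
        ring_nf
      rw [ha_def, hb_def, hexp]
      field_simp
    have hV0 : 0 ≤ V := ENNReal.toReal_nonneg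
    have hV4 : (V ^ ((1 : ℝ) / 4)) ^ (4 : ℕ) = V := by
      rw [← Real.rpow_natCast (V ^ ((1 : ℝ) / 4)) 4, ← Real.rpow_mul hV0]
      norm_num
    have hc0b : c0 * b = r⁻¹ * C2 * Real.exp (2 * M) := by
      rw [hc0_def, mul_assoc, mul_assoc, ← hab]
      ring
    have hfinal : (∫ y : EuclideanSpace ℝ (Fin 4), ‖fderiv ℝ G y‖ ^ 4)
        ≤ ((C2 * Real.exp (2 * M) * V ^ ((1 : ℝ) / 4)) / r) ^ (4 : ℕ) := by
      calc (∫ y : EuclideanSpace ℝ (Fin 4), ‖fderiv ℝ G y‖ ^ 4)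
          ≤ c0 ^ 4 * (b ^ 4 * V) := by rw [← hvol]; exact hint_le
        _ = (c0 * b) ^ 4 * V := by ring
        _ = (r⁻¹ * C2 * Real.exp (2 * M)) ^ 4 * V := by rw [hc0b]
        _ = ((C2 * Real.exp (2 * M) * V ^ ((1 : ℝ) / 4)) / r) ^ (4 : ℕ) := by
            rw [div_pow, mul_pow (C2 * Real.exp (2 * M)) (V ^ ((1 : ℝ) / 4)), hV4]
            field_simp
    have hnn : (0 : ℝ) ≤ ∫ y : EuclideanSpace ℝ (Fin 4), ‖fderiv ℝ G y‖ ^ 4 :=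
      integral_nonneg fun y => by positivity
    have hCr : (0 : ℝ) ≤ (C2 * Real.exp (2 * M) * V ^ ((1 : ℝ) / 4)) / r := by positivity
    calc (∫ y : EuclideanSpace ℝ (Fin 4), ‖fderiv ℝ G y‖ ^ 4) ^ ((1 : ℝ) / 4)
        ≤ (((C2 * Real.exp (2 * M) * V ^ ((1 : ℝ) / 4)) / r) ^ (4 : ℕ)) ^ ((1 : ℝ) / 4) :=
          Real.rpow_le_rpow hnn hfinal (by norm_num)
      _ = (C2 * Real.exp (2 * M) * V ^ ((1 : ℝ) / 4)) / r := by
          rw [← Real.rpow_natCast _ 4, ← Real.rpow_mul hCr]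
          norm_num
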